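/- As a → +∞, the rational cubic/linear kernel S_{3/1}(t) with parameter a converges pointwise to the linear (triangular) interpolation kernel S_1(t), where S_1(t) = 1 - |t| for |t| < 1 and S_1(t) = 0 for |t| ≥ 1. -/

import Mathlib

noncomputable def S31 (a t : ℝ) : ℝ :=
  if |t| < 1 then (1 - |t|) * (1 + (1 + a) * |t| - t ^ 2) / (1 + a * |t|)
  else if |t| < 2 then (1 - |t|) * (2 - |t|) ^ 2 / (1 - a + a * |t|)
  else 0

noncomputable def S1 (t : ℝ) : ℝ := if |t| < 1 then 1 - |t| else 0

theorem S31_tendsto_linear (t : ℝ) :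
    Filter.Tendsto (fun a : ℝ => S31 a t) Filter.atTop (nhds (S1 t)) := by
  rcases lt_or_ge |t| 1 with h1 | h1
  · -- |t| < 1
    rcases eq_or_lt_of_le (abs_nonneg t) with h0 | h0
    · -- t = 0
      have ht0 : t = 0 := abs_eq_zero.mp h0.symm
      have : ∀ a : ℝ, S31 a t = S1 t := by
        intro a
        simp [S31, S1, ht0]
      simpa [this] using tendsto_const_nhds
    · -- 0 < |t| < 1
      have hS1 : S1 t = 1 - |t| := by simp [S1, h1]
      have hden : Filter.Tendsto (fun a : ℝ => 1 + a * |t|) Filter.atTop Filter.atTop := by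
        apply Filter.tendsto_atTop_add_const_left
        exact Filter.Tendsto.atTop_mul_const h0 Filter.tendsto_id
      have hfrac : Filter.Tendsto (fun a : ℝ => (|t| - t ^ 2) / (1 + a * |t|))
          Filter.atTop (nhds 0) :=
        Filter.Tendsto.div_atTop tendsto_const_nhds hden
      have hlim : Filter.Tendsto (fun a : ℝ => (1 - |t|) * (1 + (|t| - t ^ 2) / (1 + a * |t|)))
          Filter.atTop (nhds (1 - |t|)) := by
        have := (tendsto_const_nhds (α := ℝ) (x := (1:ℝ))).add hfrac
        have h2 := this.const_mul (1 - |t|)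
        simpa using h2
      rw [hS1]
      apply hlim.congr'
      filter_upwards [Filter.eventually_ge_atTop (1:ℝ)] with a ha
      have hd : (1 : ℝ) + a * |t| ≠ 0 := by positivity
      simp only [S31, if_pos h1]
      field_simp
      ring
  · -- |t| ≥ 1
    have hS1 : S1 t = 0 := by simp [S1, not_lt.mpr h1]
    rw [hS1]
    rcases eq_or_lt_of_le h1 with heq | hgt
    · -- |t| = 1
      have : ∀ a : ℝ, S31 a t = 0 := by
        intro a
        simp [S31, ← heq]
      simpa [this] using tendsto_const_nhds
    · rcases lt_or_ge |t| 2 with h2 | h2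
      · -- 1 < |t| < 2
        have hden : Filter.Tendsto (fun a : ℝ => 1 - a + a * |t|) Filter.atTop Filter.atTop := by
          have h : Filter.Tendsto (fun a : ℝ => 1 + a * (|t| - 1)) Filter.atTop Filter.atTop := by
            apply Filter.tendsto_atTop_add_const_left
            exact Filter.Tendsto.atTop_mul_const (by linarith) Filter.tendsto_id
          apply h.congr
          intro a; ring
        have hlim := Filter.Tendsto.div_atTop
          (tendsto_const_nhds (x := (1 - |t|) * (2 - |t|) ^ 2)) hden
        apply hlim.congr
        intro a
        simp [S31, not_lt.mpr h1, h2]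
      · -- |t| ≥ 2
        have : ∀ a : ℝ, S31 a t = 0 := by
          intro a
          simp [S31, not_lt.mpr h1, not_lt.mpr h2]
        simpa [this] using tendsto_const_nhds
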